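/- Suppose that from block m onward the agent clicks a fixed number T' of steps per block, i.e. clk(k) = 1 iff (k mod s) < T' for all k ≥ m·s, and suppose the opinion at the start of block m satisfies x(m·s) = (1 − Υₘ)·x₀ + Υₘ·u₀ for some real Υₘ. Then for every i ≥ m, x(i·s) = (1 − Υᵢ)·x₀ + Υᵢ·u₀, where Υᵢ = ((1 − (B^s Z^{T'})^{i−m})/(1 − B^s Z^{T'})) · (1 − η) · B^{s−T'} · (1 − β^{T'}) + (B^s Z^{T'})^{i−m} · Υₘ. -/

import Mathlib

lemma ads_block_step (α β x₀ u₀ : ℝ) (hα : 0 < α) (hβ : 0 < β) (hαβ : α + β ≤ 1)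
    (s T' : ℕ) (hT' : T' ≤ s)
    (clk : ℕ → ℕ) (x : ℕ → ℝ)
    (hdyn : ∀ k, x (k + 1) =
      if clk k = 1 then α * x₀ + β * x k + (1 - α - β) * u₀
      else α / (α + β) * x₀ + β / (α + β) * x k)
    (k0 : ℕ) (hclk : ∀ n, n < s → clk (k0 + n) = if n < T' then 1 else 0)
    (c : ℝ) (hxk : x k0 = (1 - c) * x₀ + c * u₀) :
    x (k0 + s) = (1 - ((β/(α+β))^(s-T') * (β^T' * c + (1-α-β)*(1-β^T')/(1-β)))) * x₀
      + ((β/(α+β))^(s-T') * (β^T' * c + (1-α-β)*(1-β^T')/(1-β))) * u₀ := by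
  have hZ : (α + β) ≠ 0 := by positivity
  have hβ1 : β < 1 := by linarith
  have h1β : (1 : ℝ) - β ≠ 0 := by linarith
  -- phase 1: click steps
  have claim1 : ∀ n, n ≤ T' → x (k0 + n) =
      (1 - (β^n * c + (1-α-β)*(1-β^n)/(1-β))) * x₀
      + (β^n * c + (1-α-β)*(1-β^n)/(1-β)) * u₀ := by
    intro n hn
    induction n with
    | zero => simpa using hxk
    | succ n ih =>
      have hn' : n ≤ T' := Nat.le_of_succ_le hn
      have ihx := ih hn'
      have hns : n < s := lt_of_lt_of_le hn hT'
      have hc : clk (k0 + n) = 1 := by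
        rw [hclk n hns]; simp [lt_of_lt_of_le hn (le_refl T') , Nat.lt_of_succ_le hn]
      have := hdyn (k0 + n)
      rw [hc] at this
      simp only [if_pos rfl, ↓reduceIte] at this
      rw [show k0 + (n+1) = (k0 + n) + 1 by ring, this, ihx, pow_succ]
      field_simp
      ring
  have hT'x := claim1 T' le_rfl
  -- phase 2: no-click steps
  have claim2 : ∀ j, j ≤ s - T' → x (k0 + T' + j) =
      (1 - (β/(α+β))^j * (β^T' * c + (1-α-β)*(1-β^T')/(1-β))) * x₀
      + (β/(α+β))^j * (β^T' * c + (1-α-β)*(1-β^T')/(1-β)) * u₀ := by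
    intro j hj
    induction j with
    | zero => simpa using hT'x
    | succ j ih =>
      have hj' : j ≤ s - T' := Nat.le_of_succ_le hj
      have ihx := ih hj'
      have hlt : T' + j < s := by omega
      have hc : clk (k0 + (T' + j)) = 0 := by
        rw [hclk (T' + j) hlt]; simp
      have := hdyn (k0 + (T' + j))
      rw [hc] at this
      norm_num at this
      have heq : k0 + T' + (j + 1) = (k0 + (T' + j)) + 1 := by ring
      have heq2 : k0 + T' + j = k0 + (T' + j) := by ring
      rw [heq, this, ← heq2, ihx, pow_succ]
      field_simp
      ring
  have := claim2 (s - T') le_rfl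
  rwa [show k0 + T' + (s - T') = k0 + s by omega] at this

theorem adaptive_decreasing_steady_state_block_opinion
    (α β x₀ u₀ : ℝ) (hα : 0 < α) (hβ : 0 < β) (hαβ : α + β ≤ 1)
    (hx₀ : -1 ≤ x₀ ∧ x₀ ≤ 1) (hu₀ : -1 ≤ u₀ ∧ u₀ ≤ 1)
    (s T' m : ℕ) (hs : 1 ≤ s) (hT' : T' ≤ s)
    (clk : ℕ → ℕ) (hclk : ∀ k, m * s ≤ k → clk k = if k % s < T' then 1 else 0)
    (hclk01 : ∀ k, clk k = 0 ∨ clk k = 1)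
    (x : ℕ → ℝ) (hx0 : x 0 = x₀)
    (hdyn : ∀ k, x (k + 1) =
      if clk k = 1 then α * x₀ + β * x k + (1 - α - β) * u₀
      else α / (α + β) * x₀ + β / (α + β) * x k)
    (Υₘ : ℝ) (hxm : x (m * s) = (1 - Υₘ) * x₀ + Υₘ * u₀) :
    ∀ i : ℕ, m ≤ i →
      x (i * s) =
        (1 - ((1 - ((β / (α + β)) ^ s * (α + β) ^ T') ^ (i - m)) /
            (1 - (β / (α + β)) ^ s * (α + β) ^ T') *
            (1 - α / (1 - β)) * (β / (α + β)) ^ (s - T') * (1 - β ^ T') +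
            ((β / (α + β)) ^ s * (α + β) ^ T') ^ (i - m) * Υₘ)) * x₀ +
        ((1 - ((β / (α + β)) ^ s * (α + β) ^ T') ^ (i - m)) /
            (1 - (β / (α + β)) ^ s * (α + β) ^ T') *
            (1 - α / (1 - β)) * (β / (α + β)) ^ (s - T') * (1 - β ^ T') +
            ((β / (α + β)) ^ s * (α + β) ^ T') ^ (i - m) * Υₘ) * u₀ := by
  have hZ0 : (0:ℝ) < α + β := by linarith
  have hZ : (α + β) ≠ 0 := by positivity
  have hβ1 : β < 1 := by linarith
  have h1β : (1 : ℝ) - β ≠ 0 := by linarith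
  set B : ℝ := β / (α + β) with hB
  set q : ℝ := B ^ s * (α + β) ^ T' with hq
  have hB1 : B < 1 := by
    rw [hB, div_lt_one hZ0]; linarith
  have hB0 : 0 < B := by positivity
  have hq1 : q < 1 := by
    have h1 : B ^ s < 1 := pow_lt_one₀ hB0.le hB1 (by omega)
    have h2 : (α + β) ^ T' ≤ 1 := pow_le_one₀ hZ0.le hαβ
    calc q ≤ B ^ s * 1 := by
            apply mul_le_mul_of_nonneg_left h2 (by positivity)
      _ < 1 := by simpa using h1
  have hq1' : (1:ℝ) - q ≠ 0 := by
    have : 0 < 1 - q := by linarith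
    linarith
  have hkey : B ^ (s - T') * β ^ T' = q := by
    have hβBZ : β = B * (α + β) := by rw [hB, div_mul_cancel₀ _ hZ]
    rw [hq]
    conv_lhs => rw [hβBZ]
    rw [mul_pow, ← mul_assoc, ← pow_add]
    rw [Nat.sub_add_cancel hT']
  -- Υ formula and recurrence
  set K : ℝ := (1 - α / (1 - β)) * B ^ (s - T') * (1 - β ^ T') with hK
  have hKconst : B ^ (s - T') * ((1 - α - β) * (1 - β ^ T') / (1 - β)) = K := by
    rw [hK]; field_simp; ring
  intro i hi
  induction i, hi using Nat.le_induction with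
  | base =>
    simp only [Nat.sub_self, pow_zero]
    rw [hxm]; ring_nf
  | succ i hi ih =>
    set n : ℕ := i - m with hn
    have hn1 : i + 1 - m = n + 1 := by omega
    set Υi : ℝ := (1 - q ^ n) / (1 - q) * K + q ^ n * Υₘ with hΥi
    have ihx : x (i * s) = (1 - Υi) * x₀ + Υi * u₀ := by
      rw [ih, hΥi, hK]; ring
    have hblk : ∀ k, k < s → clk (i * s + k) = if k < T' then 1 else 0 := by
      intro k hk
      have hle : m * s ≤ i * s + k := le_trans (Nat.mul_le_mul_right s hi) (Nat.le_add_right _ _)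
      rw [hclk _ hle, Nat.add_comm, Nat.add_mul_mod_self_right, Nat.mod_eq_of_lt hk]
    have hstep := ads_block_step α β x₀ u₀ hα hβ hαβ s T' hT' clk x hdyn (i * s) hblk Υi ihx
    rw [show i * s + s = (i + 1) * s by ring] at hstep
    rw [hstep, hn1]
    have halg : B ^ (s - T') * (β ^ T' * Υi + (1 - α - β) * (1 - β ^ T') / (1 - β))
        = (1 - q ^ (n + 1)) / (1 - q) * K + q ^ (n + 1) * Υₘ := by
      rw [mul_add, hKconst, ← mul_assoc, hkey, hΥi]
      field_simp
      ring
    rw [halg]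
    rw [hK]; ring
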